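/- arXiv:2002.07085 — 3 statements merged into one kernel-verified Lean document; each statement's English description precedes it below -/
import Mathlib

section
/- Let Γ = (γ_{ij}) be a nonnegative infinite matrix bounded as an operator on ℓ¹, and Λ = diag(λ_i) with 0 < λ̲ ≤ λ_i ≤ λ̄ for all i. Assume the spectral radius of Ψ = Λ^{-1}Γ on ℓ¹ satisfies r(Ψ) < 1. Then there exist a sequence μ = (μ_i) ∈ ℓ^∞ with inf_i μ_i > 0 and a constant λ_∞ > 0 such that for every i ∈ ℕ: (Σ_j μ_j(−Λ + Γ)_{ji}) / μ_i ≤ −λ_∞, i.e., −μ_i λ_i + Σ_j μ_j γ_{ji} ≤ −λ_∞ μ_i. -/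
set_option synthInstance.maxHeartbeats 1000000
set_option maxHeartbeats 1000000

noncomputable section StmtAux6

abbrev E1 : Type := lp (fun _ : ℕ => ℝ) 1

lemma summable_coe1 (x : E1) : Summable fun i => x i := by
  have h := (lp.memℓp x).summable (p := 1) (by norm_num)
  simp only [ENNReal.toReal_one, Real.rpow_one] at h
  exact h.of_norm

lemma norm_eq_tsum1 (x : E1) : ‖x‖ = ∑' i, ‖x i‖ := by
  have := lp.norm_eq_tsum_rpow (p := 1) (by norm_num) x
  simpa using this

noncomputable def coordCLM (i : ℕ) : E1 →L[ℝ] ℝ :=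
  LinearMap.mkContinuous
    { toFun := fun x => x i
      map_add' := fun x y => by simp [lp.coeFn_add]
      map_smul' := fun c x => by simp [lp.coeFn_smul] }
    1 (fun x => by show ‖x i‖ ≤ 1 * ‖x‖; rw [one_mul]; exact lp.norm_apply_le_norm one_ne_zero x i)

@[simp] lemma coordCLM_apply (i : ℕ) (x : E1) : coordCLM i x = x i := rfl

noncomputable def sumCLM : E1 →L[ℝ] ℝ :=
  LinearMap.mkContinuous
    { toFun := fun x => ∑' i, x i
      map_add' := fun x y => by
        simp only [lp.coeFn_add, Pi.add_apply]
        exact Summable.tsum_add (summable_coe1 x) (summable_coe1 y)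
      map_smul' := fun c x => by
        simp only [lp.coeFn_smul, Pi.smul_apply, smul_eq_mul, RingHom.id_apply]
        exact tsum_mul_left }
    1 (fun x => by
      rw [one_mul, norm_eq_tsum1]
      exact norm_tsum_le_tsum_norm ((summable_coe1 x).abs))

lemma sumCLM_apply (x : E1) : sumCLM x = ∑' i, x i := rfl

def Pos : Set (E1 →L[ℝ] E1) := {T | ∀ x : E1, (∀ i, 0 ≤ x i) → ∀ i, 0 ≤ T x i}

lemma Pos.one : (1 : E1 →L[ℝ] E1) ∈ Pos := fun x hx i => by simpa using hx i

lemma Pos.mul {T S : E1 →L[ℝ] E1} (hT : T ∈ Pos) (hS : S ∈ Pos) : T * S ∈ Pos :=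
  fun x hx i => hT (S x) (hS x hx) i

lemma Pos.pow {T : E1 →L[ℝ] E1} (hT : T ∈ Pos) (n : ℕ) : T ^ n ∈ Pos := by
  induction n with
  | zero => simpa using Pos.one
  | succ n ih => rw [pow_succ]; exact Pos.mul ih hT

lemma Pos.smul {T : E1 →L[ℝ] E1} (hT : T ∈ Pos) {c : ℝ} (hc : 0 ≤ c) : c • T ∈ Pos := by
  intro x hx i
  have := hT x hx i
  simp only [ContinuousLinearMap.coe_smul', Pi.smul_apply]
  have h2 : ((c • T x : E1) : ℕ → ℝ) i = c * T x i := by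
    simp [lp.coeFn_smul]
  rw [h2]
  positivity

lemma Pos.tsum {f : ℕ → E1 →L[ℝ] E1} (hf : Summable f) (h : ∀ n, f n ∈ Pos) :
    (∑' n, f n) ∈ Pos := by
  intro x hx i
  have h1 : HasSum (fun n => (f n) x) ((∑' n, f n) x) := by
    have := hf.hasSum
    exact (ContinuousLinearMap.apply ℝ E1 x).hasSum this
  have h2 : HasSum (fun n => (f n) x i) (((∑' n, f n) x : E1) i) :=
    (coordCLM i).hasSum h1
  exact hasSum_le (fun n => h n x hx i) hasSum_zero h2

lemma isClosed_Pos : IsClosed Pos := by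
  have : Pos = ⋂ (x : E1), ⋂ (i : ℕ),
      {T : E1 →L[ℝ] E1 | (∀ j, 0 ≤ x j) → 0 ≤ coordCLM i (T x)} := by
    ext T
    simp only [Set.mem_iInter, Set.mem_setOf_eq, coordCLM_apply]
    exact ⟨fun h x i hx => h x hx i, fun h x hx i => h x i hx⟩
  rw [this]
  refine isClosed_iInter fun x => isClosed_iInter fun i => ?_
  by_cases hx : ∀ j, 0 ≤ x j
  · have hset : {T : E1 →L[ℝ] E1 | (∀ j, 0 ≤ x j) → 0 ≤ coordCLM i (T x)}
        = {T : E1 →L[ℝ] E1 | 0 ≤ coordCLM i (T x)} := by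
      ext T; exact ⟨fun h => h hx, fun h _ => h⟩
    rw [hset]
    exact isClosed_le continuous_const
      ((coordCLM i).continuous.comp (ContinuousLinearMap.apply ℝ E1 x).continuous)
  · have hset : {T : E1 →L[ℝ] E1 | (∀ j, 0 ≤ x j) → 0 ≤ coordCLM i (T x)} = Set.univ := by
      ext T; simpa using fun h => absurd h hx
    rw [hset]; exact isClosed_univ

lemma inverse_eq_of_mul {A : Type*} [Ring A] {a x : A} (ha : IsUnit a) (h : a * x = 1) :
    Ring.inverse a = x := by
  calc Ring.inverse a = Ring.inverse a * (a * x) := by rw [h, mul_one]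
  _ = x := by rw [← mul_assoc, Ring.inverse_mul_cancel a ha, one_mul]


lemma pos_inverse_of_big {Ψ : E1 →L[ℝ] E1} (hΨpos : Ψ ∈ Pos) {t : ℝ} (ht : ‖Ψ‖ < t) :
    Ring.inverse (t • (1 : E1 →L[ℝ] E1) - Ψ) ∈ Pos := by
  have ht0 : 0 < t := lt_of_le_of_lt (norm_nonneg Ψ) ht
  set v : E1 →L[ℝ] E1 := t⁻¹ • Ψ with hv_def
  have hv : ‖v‖ < 1 := by
    rw [hv_def]
    refine lt_of_le_of_lt (ContinuousLinearMap.opNorm_smul_le _ _) ?_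
    rw [norm_inv, Real.norm_of_nonneg ht0.le, inv_mul_lt_iff₀ ht0, mul_one]
    exact ht
  have hfac : t • (1 : E1 →L[ℝ] E1) - Ψ = t • ((1 : E1 →L[ℝ] E1) - v) := by
    rw [smul_sub, hv_def, smul_smul, mul_inv_cancel₀ ht0.ne', one_smul]
  have hvpos : v ∈ Pos := Pos.smul hΨpos (inv_nonneg.2 ht0.le)
  set S : E1 →L[ℝ] E1 := ∑' n : ℕ, v ^ n with hS_def
  have hmul1 : (t • (1 : E1 →L[ℝ] E1) - Ψ) * (t⁻¹ • S) = 1 := by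
    rw [hfac, smul_mul_smul_comm, mul_inv_cancel₀ ht0.ne', mul_neg_geom_series v hv, one_smul]
  have hmul2 : (t⁻¹ • S) * (t • (1 : E1 →L[ℝ] E1) - Ψ) = 1 := by
    rw [hfac, smul_mul_smul_comm, inv_mul_cancel₀ ht0.ne', geom_series_mul_neg v hv, one_smul]
  have hunit : IsUnit (t • (1 : E1 →L[ℝ] E1) - Ψ) :=
    ⟨⟨t • (1 : E1 →L[ℝ] E1) - Ψ, t⁻¹ • S, hmul1, hmul2⟩, rfl⟩
  rw [inverse_eq_of_mul hunit hmul1]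
  exact Pos.smul (Pos.tsum (summable_geometric_of_norm_lt_one hv) (fun n => Pos.pow hvpos n))
    (inv_nonneg.2 ht0.le)

lemma pos_inverse_step {Ψ : E1 →L[ℝ] E1} {s t : ℝ} (hst : s ≤ t)
    (hs_unit : IsUnit (s • (1 : E1 →L[ℝ] E1) - Ψ))
    (ht_unit : IsUnit (t • (1 : E1 →L[ℝ] E1) - Ψ))
    (hR : Ring.inverse (t • (1 : E1 →L[ℝ] E1) - Ψ) ∈ Pos)
    (hsmall : (t - s) * ‖Ring.inverse (t • (1 : E1 →L[ℝ] E1) - Ψ)‖ < 1) :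
    Ring.inverse (s • (1 : E1 →L[ℝ] E1) - Ψ) ∈ Pos := by
  set R0 : E1 →L[ℝ] E1 := Ring.inverse (t • (1 : E1 →L[ℝ] E1) - Ψ) with hR0_def
  set ε : ℝ := t - s with hε_def
  have hε0 : 0 ≤ ε := sub_nonneg.2 hst
  have hv : ‖ε • R0‖ < 1 := by
    refine lt_of_le_of_lt (ContinuousLinearMap.opNorm_smul_le _ _) ?_
    rw [Real.norm_of_nonneg hε0]; exact hsmall
  set S : E1 →L[ℝ] E1 := ∑' n : ℕ, (ε • R0) ^ n with hS_def
  have hcancel : (t • (1 : E1 →L[ℝ] E1) - Ψ) * R0 = 1 := Ring.mul_inverse_cancel _ ht_unit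
  have hfac : s • (1 : E1 →L[ℝ] E1) - Ψ
      = (t • (1 : E1 →L[ℝ] E1) - Ψ) * ((1 : E1 →L[ℝ] E1) - ε • R0) := by
    rw [mul_sub, mul_one, mul_smul_comm, hcancel, hε_def, sub_smul]
    abel
  have hmul1 : (s • (1 : E1 →L[ℝ] E1) - Ψ) * (S * R0) = 1 := by
    rw [hfac, mul_assoc, ← mul_assoc ((1 : E1 →L[ℝ] E1) - ε • R0),
      mul_neg_geom_series _ hv, one_mul, hcancel]
  rw [inverse_eq_of_mul hs_unit hmul1]
  exact Pos.mul
    (Pos.tsum (summable_geometric_of_norm_lt_one hv) (fun n => Pos.pow (Pos.smul hR hε0) n)) hR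

end StmtAux6

open scoped ENNReal NNReal

/-- If `Γ` is nonnegative and bounded on `ℓ¹`, `Λ = diag(λᵢ)` with `0 < λ̲ ≤ λᵢ ≤ λ̄`, and the
spectral radius of `Ψ = Λ⁻¹Γ` on `ℓ¹` satisfies `r(Ψ) < 1`, then there is a uniformly positive
bounded sequence `μ` and `λ∞ > 0` with `−μᵢλᵢ + ∑ⱼ μⱼ γ_{ji} ≤ −λ∞ μᵢ` for all `i`. -/
theorem stmt_6 (Γ : ℕ → ℕ → ℝ) (hΓ : ∀ i j, 0 ≤ Γ i j)
    (hcol : ∀ j, Summable fun i => Γ i j)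
    (C : ℝ) (hC : ∀ j, ∑' i, Γ i j ≤ C)
    (lam : ℕ → ℝ) (lamL lamU : ℝ) (hlamL : 0 < lamL)
    (hlam : ∀ i, lamL ≤ lam i ∧ lam i ≤ lamU)
    (Ψ : lp (fun _ : ℕ => ℝ) 1 →L[ℝ] lp (fun _ : ℕ => ℝ) 1)
    (hΨ : ∀ (x : lp (fun _ : ℕ => ℝ) 1) (i : ℕ),
      Ψ x i = ∑' j, (Γ i j / lam i) * x j)
    (hr : spectralRadius ℝ Ψ < 1) :
    ∃ (μ : ℕ → ℝ) (lamInf : ℝ), 0 < lamInf ∧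
      (∃ m : ℝ, 0 < m ∧ ∀ i, m ≤ μ i) ∧ BddAbove (Set.range μ) ∧
      ∀ i, (Summable fun j => μ j * Γ j i) ∧
        -(μ i * lam i) + ∑' j, μ j * Γ j i ≤ -(lamInf * μ i) := by
  classical
  have hlami : ∀ i, 0 < lam i := fun i => lt_of_lt_of_le hlamL (hlam i).1
  -- Ψ is a positive operator
  have hΨpos : Ψ ∈ Pos := by
    intro x hx i
    rw [hΨ x i]
    exact tsum_nonneg fun j => mul_nonneg (div_nonneg (hΓ i j) (hlami i).le) (hx j)
  -- units
  have hunit : ∀ t : ℝ, 1 ≤ t → IsUnit (t • (1 : E1 →L[ℝ] E1) - Ψ) := by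
    intro t ht
    have h1 : (1 : ℝ≥0∞) ≤ (‖t‖₊ : ℝ≥0∞) := by
      rw [ENNReal.one_le_coe_iff, ← NNReal.coe_le_coe, NNReal.coe_one, coe_nnnorm,
        Real.norm_eq_abs]
      exact ht.trans (le_abs_self t)
    have h2 : t ∈ resolventSet ℝ Ψ :=
      spectrum.mem_resolventSet_of_spectralRadius_lt (lt_of_lt_of_le hr h1)
    have h3 : IsUnit (algebraMap ℝ (E1 →L[ℝ] E1) t - Ψ) := h2
    rwa [Algebra.algebraMap_eq_smul_one] at h3
  set b : ℝ := max 1 (‖Ψ‖ + 1) with hb_def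
  have hb1 : (1 : ℝ) ≤ b := le_max_left _ _
  have hbΨ : ‖Ψ‖ < b := lt_of_lt_of_le (lt_add_one _) (le_max_right _ _)
  set Res : ℝ → (E1 →L[ℝ] E1) := fun t => Ring.inverse (t • (1 : E1 →L[ℝ] E1) - Ψ)
    with hRes_def
  have hcont : ∀ t : ℝ, 1 ≤ t → ContinuousAt Res t := by
    intro t ht
    have h1 : ContinuousAt (fun s : ℝ => s • (1 : E1 →L[ℝ] E1) - Ψ) t :=
      ((continuous_id.smul continuous_const).sub continuous_const).continuousAt
    have h2 : ContinuousAt (Ring.inverse : (E1 →L[ℝ] E1) → (E1 →L[ℝ] E1))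
        ((fun s : ℝ => s • (1 : E1 →L[ℝ] E1) - Ψ) t) := by
      have := NormedRing.inverse_continuousAt (hunit t ht).unit
      rwa [(hunit t ht).unit_spec] at this
    exact h2.tendsto.comp h1
  set Sst : Set ℝ := {t | t ∈ Set.Icc (1 : ℝ) b ∧ ∀ s ∈ Set.Icc t b, Res s ∈ Pos}
    with hSst_def
  have hbS : b ∈ Sst := by
    refine ⟨⟨hb1, le_refl b⟩, ?_⟩
    intro s hs
    exact pos_inverse_of_big hΨpos (lt_of_lt_of_le hbΨ hs.1)
  have hSne : Sst.Nonempty := ⟨b, hbS⟩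
  have hSbdd : BddBelow Sst := ⟨1, fun t ht => ht.1.1⟩
  set c : ℝ := sInf Sst with hc_def
  have hc1 : 1 ≤ c := le_csInf hSne fun t ht => ht.1.1
  have hcb : c ≤ b := csInf_le hSbdd hbS
  have hcS : ∀ s ∈ Set.Icc c b, Res s ∈ Pos := by
    have hmemgt : ∀ u, c < u → u ≤ b → Res u ∈ Pos := by
      intro u hcu hub
      obtain ⟨t0, ht0S, ht0lt⟩ := exists_lt_of_csInf_lt hSne hcu
      exact ht0S.2 u ⟨ht0lt.le, hub⟩
    intro s hs
    rcases eq_or_lt_of_le hs.1 with heq | hlt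
    · rcases eq_or_lt_of_le hcb with hcb' | hcb'
      · exact hbS.2 s ⟨hcb' ▸ hs.1, hs.2⟩
      · have htend : Filter.Tendsto Res (nhdsWithin c (Set.Ioi c)) (nhds (Res c)) :=
          ((hcont c hc1).tendsto).mono_left nhdsWithin_le_nhds
        have hev : ∀ᶠ u in nhdsWithin c (Set.Ioi c), Res u ∈ Pos := by
          filter_upwards [Ioc_mem_nhdsGT_of_mem ⟨le_refl c, hcb'⟩] with u hu
          exact hmemgt u hu.1 hu.2
        have := isClosed_Pos.mem_of_tendsto htend hev
        rwa [← heq]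
    · exact hmemgt s hlt hs.2
  have hceq : c = 1 := by
    by_contra hne
    have hlt1 : 1 < c := lt_of_le_of_ne hc1 (Ne.symm hne)
    have hRc : Res c ∈ Pos := hcS c ⟨le_refl c, hcb⟩
    set K : ℝ := ‖Res c‖ + 1 with hK
    have hK0 : 0 < K := by positivity
    set s0 : ℝ := max 1 (c - 1 / (2 * K)) with hs0
    have hs01 : 1 ≤ s0 := le_max_left _ _
    have hs0c : s0 < c := by
      apply max_lt hlt1
      have : 0 < 1 / (2 * K) := by positivity
      linarith
    have hs0S : s0 ∈ Sst := by
      refine ⟨⟨hs01, hs0c.le.trans hcb⟩, ?_⟩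
      intro u hu
      rcases le_or_gt c u with hcu | huc
      · exact hcS u ⟨hcu, hu.2⟩
      · refine pos_inverse_step huc.le (hunit u (hs01.trans hu.1)) (hunit c hc1) hRc ?_
        have h1 : c - u ≤ 1 / (2 * K) := by
          have h2 : c - 1 / (2 * K) ≤ s0 := le_max_right _ _
          have h3 : s0 ≤ u := hu.1
          linarith
        have hN : (0 : ℝ) ≤ ‖Res c‖ := norm_nonneg _
        have hNK : ‖Res c‖ ≤ K := by rw [hK]; linarith
        have h4 : (c - u) * ‖Res c‖ ≤ 1 / (2 * K) * K :=
          mul_le_mul h1 hNK hN (by positivity)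
        have h5 : 1 / (2 * K) * K = 1 / 2 := by field_simp
        linarith
    have : c ≤ s0 := csInf_le hSbdd hs0S
    linarith
  -- the resolvent at 1
  set R : E1 →L[ℝ] E1 := Res 1 with hR_def
  have hRpos : R ∈ Pos := hcS 1 ⟨hceq.le, hb1⟩
  have hRu : IsUnit ((1 : ℝ) • (1 : E1 →L[ℝ] E1) - Ψ) := hunit 1 le_rfl
  have hmulL : ((1 : ℝ) • (1 : E1 →L[ℝ] E1) - Ψ) * R = 1 := Ring.mul_inverse_cancel _ hRu
  have hmulR : R * ((1 : ℝ) • (1 : E1 →L[ℝ] E1) - Ψ) = 1 := Ring.inverse_mul_cancel _ hRu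
  have hL : R = 1 + Ψ * R := by
    have h : R - Ψ * R = 1 := by
      have := hmulL
      rwa [sub_mul, one_smul, one_mul] at this
    rwa [sub_eq_iff_eq_add] at h
  have hR2 : R = 1 + R * Ψ := by
    have h : R - R * Ψ = 1 := by
      have := hmulR
      rwa [mul_sub, mul_smul_comm, one_smul, mul_one] at this
    rwa [sub_eq_iff_eq_add] at h
  -- basis vectors and μ
  set e : ℕ → E1 := fun j => lp.single 1 j (1 : ℝ) with he_def
  have he_apply : ∀ j k, (e j : ℕ → ℝ) k = if k = j then 1 else 0 := by
    intro j k
    by_cases h : k = j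
    · subst h; simp [he_def, lp.single_apply_self]
    · simp [he_def, lp.single_apply_ne _ _ _ h, h]
  have he_pos : ∀ j k, (0 : ℝ) ≤ (e j : ℕ → ℝ) k := by
    intro j k; rw [he_apply]; split <;> norm_num
  set μ : ℕ → ℝ := fun j => sumCLM (R (e j)) with hμ_def
  have hRe : ∀ j k, 0 ≤ (R (e j) : ℕ → ℝ) k := fun j k => hRpos (e j) (he_pos j) k
  have happL : ∀ x : E1, R x = x + Ψ (R x) := by
    intro x
    conv_lhs => rw [hL]
    simp [ContinuousLinearMap.add_apply, ContinuousLinearMap.mul_apply,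
      ContinuousLinearMap.one_apply]
  have hμ_ge1 : ∀ j, 1 ≤ μ j := by
    intro j
    have h2 : (R (e j) : ℕ → ℝ) j = (e j : ℕ → ℝ) j + (Ψ (R (e j)) : ℕ → ℝ) j := by
      have h := congrArg (fun y : E1 => (y : ℕ → ℝ) j) (happL (e j))
      simpa [lp.coeFn_add] using h
    have h3 : 1 ≤ (R (e j) : ℕ → ℝ) j := by
      have hpos := hΨpos _ (hRe j) j
      rw [he_apply] at h2
      norm_num at h2
      linarith
    have h4 : (R (e j) : ℕ → ℝ) j ≤ ∑' k, (R (e j) : ℕ → ℝ) k :=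
      Summable.le_tsum (summable_coe1 _) j fun k _ => hRe j k
    calc (1 : ℝ) ≤ (R (e j) : ℕ → ℝ) j := h3
    _ ≤ ∑' k, (R (e j) : ℕ → ℝ) k := h4
    _ = μ j := rfl
  have he_norm : ∀ j, ‖e j‖ = 1 := by
    intro j
    have := lp.norm_single (p := 1) (E := fun _ : ℕ => ℝ) (by norm_num) j (1 : ℝ)
    simpa [he_def] using this
  have hμ_le : ∀ j, μ j ≤ ‖R‖ := by
    intro j
    have h1 : μ j ≤ ∑' k, ‖(R (e j) : ℕ → ℝ) k‖ := by
      refine Summable.tsum_le_tsum (fun k => le_abs_self _) (summable_coe1 _) ?_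
      exact (summable_coe1 _).abs
    have h2 : ∑' k, ‖(R (e j) : ℕ → ℝ) k‖ = ‖R (e j)‖ := (norm_eq_tsum1 _).symm
    have h3 : ‖R (e j)‖ ≤ ‖R‖ * ‖e j‖ := R.le_opNorm _
    rw [he_norm j, mul_one] at h3
    linarith [h1.trans_eq h2]
  have hRn1 : 1 ≤ ‖R‖ := (hμ_ge1 0).trans (hμ_le 0)
  have hRn0 : 0 < ‖R‖ := lt_of_lt_of_le one_pos hRn1
  -- values of Ψ on basis vectors
  have hentry : ∀ i j, (Ψ (e i) : ℕ → ℝ) j = Γ j i / lam j := by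
    intro i j
    rw [hΨ (e i) j, tsum_eq_single i]
    · rw [he_apply]; simp
    · intro k hk; rw [he_apply]; simp [hk]
  -- the key has-sum identity
  have hkey : ∀ i, HasSum (fun j => (Ψ (e i) : ℕ → ℝ) j * μ j) (μ i - 1) := by
    intro i
    have h0 : HasSum (fun j => lp.single 1 j ((Ψ (e i) : ℕ → ℝ) j)) (Ψ (e i)) :=
      lp.hasSum_single (by norm_num) _
    have h1 : HasSum (fun j => sumCLM (R (lp.single 1 j ((Ψ (e i) : ℕ → ℝ) j))))
        (sumCLM (R (Ψ (e i)))) := (sumCLM.comp R).hasSum h0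
    have h2 : ∀ j, sumCLM (R (lp.single 1 j ((Ψ (e i) : ℕ → ℝ) j)))
        = (Ψ (e i) : ℕ → ℝ) j * μ j := by
      intro j
      have hsingle : lp.single (E := fun _ : ℕ => ℝ) 1 j ((Ψ (e i) : ℕ → ℝ) j)
          = ((Ψ (e i) : ℕ → ℝ) j) • e j := by
        rw [he_def, ← lp.single_smul, smul_eq_mul, mul_one]
      rw [hsingle, map_smul, map_smul, smul_eq_mul]
    have h4 : R (e i) = e i + R (Ψ (e i)) := by
      conv_lhs => rw [hR2]
      simp [ContinuousLinearMap.add_apply, ContinuousLinearMap.mul_apply,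
        ContinuousLinearMap.one_apply]
    have h6 : sumCLM (e i) = 1 := by
      rw [sumCLM_apply, tsum_eq_single i]
      · rw [he_apply]; simp
      · intro k hk; rw [he_apply]; simp [hk]
    have h3 : sumCLM (R (Ψ (e i))) = μ i - 1 := by
      have h5 : μ i = sumCLM (e i) + sumCLM (R (Ψ (e i))) := by
        have : μ i = sumCLM (R (e i)) := rfl
        rw [this, h4, map_add]
      rw [h6] at h5
      linarith
    simp only [h2] at h1
    rwa [h3] at h1
  -- assemble
  have hfun : ∀ i j, μ j / lam j * Γ j i = (Ψ (e i) : ℕ → ℝ) j * μ j := by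
    intro i j
    rw [hentry i j]
    field_simp
  refine ⟨fun j => μ j / lam j, lamL / ‖R‖, div_pos hlamL hRn0, ?_, ?_, ?_⟩
  · have hlamU : 0 < lamU := lt_of_lt_of_le hlamL ((hlam 0).1.trans (hlam 0).2)
    refine ⟨1 / lamU, by positivity, fun i => ?_⟩
    exact div_le_div₀ (zero_le_one.trans (hμ_ge1 i)) (hμ_ge1 i) (hlami i) (hlam i).2
  · refine ⟨‖R‖ / lamL, ?_⟩
    rintro x ⟨i, rfl⟩
    exact div_le_div₀ hRn0.le (hμ_le i) hlamL (hlam i).1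
  · intro i
    have hsummable : Summable fun j => μ j / lam j * Γ j i := by
      refine ((hkey i).summable).congr fun j => ?_
      exact (hfun i j).symm
    have htsum : ∑' j, μ j / lam j * Γ j i = μ i - 1 := by
      rw [tsum_congr fun j => hfun i j]
      exact (hkey i).tsum_eq
    refine ⟨hsummable, ?_⟩
    rw [htsum, div_mul_cancel₀ _ (hlami i).ne']
    have hfrac : μ i / lam i ≤ ‖R‖ / lamL :=
      div_le_div₀ hRn0.le (hμ_le i) hlamL (hlam i).1
    have hmul : lamL / ‖R‖ * (μ i / lam i) ≤ lamL / ‖R‖ * (‖R‖ / lamL) :=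
      mul_le_mul_of_nonneg_left hfrac (by positivity)
    have heq1 : lamL / ‖R‖ * (‖R‖ / lamL) = 1 := by
      field_simp
    linarith
end

section
/- Under the hypotheses of the previous statement, for every ρ > 0 the vector μ and constant λ_∞ can be chosen so that λ_∞ ≥ (1 − r(Ψ)) λ̲ − ρ. -/
open scoped ENNReal

set_option maxHeartbeats 1000000
set_option synthInstance.maxHeartbeats 400000

noncomputable section Stmt7Aux

local notation "E₁" => lp (fun _ : ℕ => ℝ) 1

-- summability of coordinates
lemma st7_summable_abs (f : E₁) : Summable (fun i => |f i|) := by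
  have h := lp.hasSum_norm (p := 1) (by norm_num) f
  simp only [ENNReal.toReal_one, Real.rpow_one, Real.norm_eq_abs] at h
  exact h.summable

lemma st7_norm_eq_tsum (f : E₁) : ‖f‖ = ∑' i, |f i| := by
  have h := lp.hasSum_norm (p := 1) (by norm_num) f
  simp only [ENNReal.toReal_one, Real.rpow_one, Real.norm_eq_abs] at h
  exact h.tsum_eq.symm

-- the summation functional
noncomputable def st7_L : E₁ →L[ℝ] ℝ :=
  LinearMap.mkContinuous
    { toFun := fun f => ∑' i, f i
      map_add' := fun f g => by
        have hf : Summable (fun i => f i) := (st7_summable_abs f).of_abs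
        have hg : Summable (fun i => g i) := (st7_summable_abs g).of_abs
        simpa [lp.coeFn_add, Pi.add_apply] using Summable.tsum_add hf hg
      map_smul' := fun c f => by
        simp [lp.coeFn_smul, Pi.smul_apply, smul_eq_mul, tsum_mul_left] }
    1 (by
      intro f
      simp only [LinearMap.coe_mk, AddHom.coe_mk, one_mul]
      calc |∑' i, f i| ≤ ∑' i, |f i| := by
            simpa using norm_tsum_le_tsum_norm (f := fun i => f i)
              (by simpa using st7_summable_abs f)
        _ = ‖f‖ := (st7_norm_eq_tsum f).symm)


noncomputable def st7_ev (i : ℕ) : E₁ →L[ℝ] ℝ :=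
  LinearMap.mkContinuous
    { toFun := fun f => f i
      map_add' := fun f g => by simp [lp.coeFn_add]
      map_smul' := fun c f => by simp [lp.coeFn_smul] }
    1 (fun f => by
      rw [one_mul]; exact lp.norm_apply_le_norm (E := fun _ : ℕ => ℝ) (p := 1) one_ne_zero f i)

@[simp] lemma st7_ev_apply (i : ℕ) (f : E₁) : st7_ev i f = f i := rfl

@[simp] lemma st7_L_apply (f : E₁) : st7_L f = ∑' i, f i := rfl

noncomputable def st7_e (j : ℕ) : E₁ := lp.single 1 j 1

lemma st7_e_apply (j i : ℕ) : (st7_e j) i = if i = j then 1 else 0 := by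
  rw [st7_e, lp.single_apply]
  split_ifs with h
  · subst h; simp
  · simp [Pi.single_apply, h]

lemma st7_L_e (j : ℕ) : st7_L (st7_e j) = 1 := by
  rw [st7_L_apply]
  rw [show (fun i => (st7_e j) i) = fun i => if i = j then (1:ℝ) else 0 from
    funext (st7_e_apply j)]
  exact tsum_ite_eq j 1

lemma st7_e_pos (j i : ℕ) : 0 ≤ (st7_e j) i := by
  rw [st7_e_apply]; split_ifs <;> norm_num

lemma st7_norm_e (j : ℕ) : ‖st7_e j‖ = 1 := by
  have := lp.norm_single (E := fun _ : ℕ => ℝ) (p := 1) (by norm_num)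
    j (1:ℝ)
  simpa [st7_e] using this

def st7_Pos (x : E₁) : Prop := ∀ i, 0 ≤ x i

lemma st7_L_nonneg {x : E₁} (hx : st7_Pos x) : 0 ≤ st7_L x :=
  tsum_nonneg hx

lemma st7_L_le_norm (x : E₁) : st7_L x ≤ ‖x‖ := by
  calc st7_L x ≤ |st7_L x| := le_abs_self _
    _ ≤ ∑' i, |x i| := by
        simpa using norm_tsum_le_tsum_norm (f := fun i => x i)
          (by simpa using st7_summable_abs x)
    _ = ‖x‖ := (st7_norm_eq_tsum x).symm

lemma st7_hasSum_basis (x : E₁) : HasSum (fun j => x j • st7_e j) x := by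
  have h := lp.hasSum_single (E := fun _ : ℕ => ℝ) (p := 1) (by norm_num) x
  convert h using 2 with j
  rw [st7_e, ← lp.single_smul]
  norm_num

/-- an operator with nonnegative columns maps nonnegative vectors to
nonnegative vectors -/
lemma st7_pos_apply (X : E₁ →L[ℝ] E₁) (hX : ∀ j, st7_Pos (X (st7_e j)))
    {x : E₁} (hx : st7_Pos x) : st7_Pos (X x) := by
  intro i
  have h1 : HasSum (fun j => x j • X (st7_e j)) (X x) := by
    simpa using (st7_hasSum_basis x).mapL X
  have h2 : HasSum (fun j => x j * (X (st7_e j)) i) ((X x) i) := by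
    simpa using h1.mapL (st7_ev i)
  rw [← h2.tsum_eq]
  exact tsum_nonneg fun j => mul_nonneg (hx j) (hX j i)

lemma st7_pow_pos_apply (X : E₁ →L[ℝ] E₁) (hX : ∀ j, st7_Pos (X (st7_e j)))
    (m : ℕ) {x : E₁} (hx : st7_Pos x) : st7_Pos ((X ^ m) x) := by
  induction m generalizing x with
  | zero => simpa using hx
  | succ m ih =>
      have : (X ^ (m+1)) x = (X ^ m) (X x) := by
        rw [pow_succ, ContinuousLinearMap.mul_apply]
      rw [this]
      exact ih (st7_pos_apply X hX hx)

noncomputable def st7_R (Ψ : E₁ →L[ℝ] E₁) (u : ℝ) : E₁ →L[ℝ] E₁ :=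
  Ring.inverse (algebraMap ℝ (E₁ →L[ℝ] E₁) u - Ψ)

lemma st7_res_apply (Ψ : E₁ →L[ℝ] E₁) {u : ℝ}
    (hu : IsUnit (algebraMap ℝ (E₁ →L[ℝ] E₁) u - Ψ)) (x : E₁) :
    u • st7_R Ψ u x - Ψ (st7_R Ψ u x) = x := by
  have h := Ring.mul_inverse_cancel _ hu
  have h2 := congrArg (fun (X : E₁ →L[ℝ] E₁) => X x) h
  simpa [ContinuousLinearMap.mul_apply, st7_R, ContinuousLinearMap.sub_apply,
    Algebra.algebraMap_eq_smul_one, ContinuousLinearMap.smul_apply,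
    ContinuousLinearMap.one_apply] using h2

lemma st7_res_step (Ψ : E₁ →L[ℝ] E₁) {u : ℝ} (hu0 : u ≠ 0)
    (hu : IsUnit (algebraMap ℝ (E₁ →L[ℝ] E₁) u - Ψ)) (x : E₁) :
    st7_R Ψ u x = u⁻¹ • x + u⁻¹ • Ψ (st7_R Ψ u x) := by
  have h := st7_res_apply Ψ hu x
  have : u • st7_R Ψ u x = x + Ψ (st7_R Ψ u x) := eq_add_of_sub_eq h
  calc st7_R Ψ u x = u⁻¹ • (u • st7_R Ψ u x) := by
        rw [smul_smul, inv_mul_cancel₀ hu0, one_smul]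
    _ = u⁻¹ • x + u⁻¹ • Ψ (st7_R Ψ u x) := by rw [this, smul_add]

lemma st7_neumann_partial (Ψ : E₁ →L[ℝ] E₁) {u : ℝ} (hu0 : u ≠ 0)
    (hu : IsUnit (algebraMap ℝ (E₁ →L[ℝ] E₁) u - Ψ)) (x : E₁) (N : ℕ) :
    st7_R Ψ u x = (∑ k ∈ Finset.range (N+1), (u⁻¹)^(k+1) • (Ψ^k) x)
      + (u⁻¹)^(N+1) • (Ψ^(N+1)) (st7_R Ψ u x) := by
  induction N with
  | zero =>
      simpa [pow_one, pow_zero, ContinuousLinearMap.one_apply] using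
        st7_res_step Ψ hu0 hu x
  | succ N ih =>
      have hsub : (Ψ^(N+1)) (st7_R Ψ u x)
          = u⁻¹ • (Ψ^(N+1)) x + u⁻¹ • (Ψ^(N+2)) (st7_R Ψ u x) := by
        have hpow : (Ψ^(N+2)) (st7_R Ψ u x) = (Ψ^(N+1)) (Ψ (st7_R Ψ u x)) := by
          rw [pow_succ, ContinuousLinearMap.mul_apply]
        conv_lhs => rw [st7_res_step Ψ hu0 hu x]
        rw [map_add, map_smul, map_smul, hpow]
      calc st7_R Ψ u x
          = (∑ k ∈ Finset.range (N+1), (u⁻¹)^(k+1) • (Ψ^k) x)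
            + (u⁻¹)^(N+1) • (Ψ^(N+1)) (st7_R Ψ u x) := ih
        _ = (∑ k ∈ Finset.range (N+1), (u⁻¹)^(k+1) • (Ψ^k) x)
            + ((u⁻¹)^(N+2) • (Ψ^(N+1)) x + (u⁻¹)^(N+2) • (Ψ^(N+2)) (st7_R Ψ u x)) := by
            rw [hsub, smul_add, smul_smul, smul_smul, ← pow_succ]
        _ = (∑ k ∈ Finset.range (N+2), (u⁻¹)^(k+1) • (Ψ^k) x)
            + (u⁻¹)^(N+2) • (Ψ^(N+2)) (st7_R Ψ u x) := by
            rw [Finset.sum_range_succ _ (N+1), add_assoc]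

def st7_sig (Ψ : E₁ →L[ℝ] E₁) (k j : ℕ) : ℝ := st7_L ((Ψ^k) (st7_e j))

lemma st7_sig_nonneg (Ψ : E₁ →L[ℝ] E₁) (hΨcol : ∀ j, st7_Pos (Ψ (st7_e j)))
    (k j : ℕ) : 0 ≤ st7_sig Ψ k j :=
  st7_L_nonneg (st7_pow_pos_apply Ψ hΨcol k (st7_e_pos j))

lemma st7_sig_le (Ψ : E₁ →L[ℝ] E₁) (hΨcol : ∀ j, st7_Pos (Ψ (st7_e j)))
    {u : ℝ} (hupos : 0 < u)
    (hu : IsUnit (algebraMap ℝ (E₁ →L[ℝ] E₁) u - Ψ))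
    (hRpos : ∀ j, st7_Pos (st7_R Ψ u (st7_e j))) (k j : ℕ) :
    st7_sig Ψ k j ≤ ‖st7_R Ψ u‖ * u^(k+1) := by
  set y := st7_R Ψ u (st7_e j) with hy
  have hid := st7_neumann_partial Ψ hupos.ne' hu (st7_e j) k
  have hupper : st7_L y ≤ ‖st7_R Ψ u‖ := by
    calc st7_L y ≤ ‖y‖ := st7_L_le_norm y
      _ ≤ ‖st7_R Ψ u‖ * ‖st7_e j‖ := (st7_R Ψ u).le_opNorm _
      _ = ‖st7_R Ψ u‖ := by rw [st7_norm_e, mul_one]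
  have hLy : st7_L y = (∑ k' ∈ Finset.range (k+1), (u⁻¹)^(k'+1) * st7_sig Ψ k' j)
      + (u⁻¹)^(k+1) * st7_L ((Ψ^(k+1)) y) := by
    conv_lhs => rw [hy, hid]
    rw [map_add, map_sum]
    simp [st7_sig, map_smul, smul_eq_mul]
    exact Or.inl rfl
  have hlower : (u⁻¹)^(k+1) * st7_sig Ψ k j ≤ st7_L y := by
    rw [hLy]
    have h1 : (u⁻¹)^(k+1) * st7_sig Ψ k j
        ≤ ∑ k' ∈ Finset.range (k+1), (u⁻¹)^(k'+1) * st7_sig Ψ k' j := by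
      refine Finset.single_le_sum (f := fun k' => (u⁻¹)^(k'+1) * st7_sig Ψ k' j)
        (fun k' _ => mul_nonneg (pow_nonneg (inv_nonneg.mpr hupos.le) _)
          (st7_sig_nonneg Ψ hΨcol k' j)) ?_
      exact Finset.self_mem_range_succ k
    have h2 : 0 ≤ (u⁻¹)^(k+1) * st7_L ((Ψ^(k+1)) y) :=
      mul_nonneg (pow_nonneg (inv_nonneg.mpr hupos.le) _)
        (st7_L_nonneg (st7_pow_pos_apply Ψ hΨcol (k+1) (hRpos j)))
    linarith
  have := hlower.trans hupper
  have hpow : 0 < u^(k+1) := pow_pos hupos _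
  calc st7_sig Ψ k j = ((u⁻¹)^(k+1) * st7_sig Ψ k j) * u^(k+1) := by
        rw [mul_comm ((u⁻¹)^(k+1)) _, mul_assoc, ← mul_pow, inv_mul_cancel₀ hupos.ne',
          one_pow, mul_one]
    _ ≤ ‖st7_R Ψ u‖ * u^(k+1) := by
        exact mul_le_mul_of_nonneg_right this hpow.le

lemma st7_base (Ψ : E₁ →L[ℝ] E₁) (hΨcol : ∀ j, st7_Pos (Ψ (st7_e j)))
    {u : ℝ} (hu : ‖Ψ‖ < u) :
    IsUnit (algebraMap ℝ (E₁ →L[ℝ] E₁) u - Ψ)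
      ∧ ∀ j, st7_Pos (st7_R Ψ u (st7_e j)) := by
  have hu0 : 0 < u := (norm_nonneg Ψ).trans_lt hu
  set t : E₁ →L[ℝ] E₁ := u⁻¹ • Ψ with ht_def
  have ht : ‖t‖ < 1 := by
    rw [ht_def]
    rw [norm_smul u⁻¹ Ψ, Real.norm_eq_abs, abs_of_pos (inv_pos.mpr hu0)]
    rw [inv_mul_lt_iff₀ hu0, mul_one]
    exact hu
  have hfact : algebraMap ℝ (E₁ →L[ℝ] E₁) u - Ψ = u • ((1 : E₁ →L[ℝ] E₁) - t) := by
    rw [Algebra.algebraMap_eq_smul_one, smul_sub, ht_def, smul_smul,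
      mul_inv_cancel₀ hu0.ne', one_smul]
  set S : E₁ →L[ℝ] E₁ := Ring.inverse (1 - t) with hS
  have hut : IsUnit ((1 : E₁ →L[ℝ] E₁) - t) := isUnit_one_sub_of_norm_lt_one ht
  have h1 : ((1 : E₁ →L[ℝ] E₁) - t) * S = 1 := Ring.mul_inverse_cancel _ hut
  have h2 : S * ((1 : E₁ →L[ℝ] E₁) - t) = 1 := Ring.inverse_mul_cancel _ hut
  have hmul1 : (algebraMap ℝ (E₁ →L[ℝ] E₁) u - Ψ) * (u⁻¹ • S) = 1 := by
    rw [hfact, smul_mul_smul_comm, mul_inv_cancel₀ hu0.ne', h1, one_smul]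
  have hmul2 : (u⁻¹ • S) * (algebraMap ℝ (E₁ →L[ℝ] E₁) u - Ψ) = 1 := by
    rw [hfact, smul_mul_smul_comm, inv_mul_cancel₀ hu0.ne', h2, one_smul]
  have hunit : IsUnit (algebraMap ℝ (E₁ →L[ℝ] E₁) u - Ψ) :=
    ⟨⟨_, u⁻¹ • S, hmul1, hmul2⟩, rfl⟩
  refine ⟨hunit, fun j i => ?_⟩
  have hR : st7_R Ψ u = u⁻¹ • S :=
    Ring.inverse_unit ⟨_, u⁻¹ • S, hmul1, hmul2⟩
  have hgeom : HasSum (fun m : ℕ => t^m) S := hasSum_geom_series_inverse t ht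
  have hsum : HasSum (fun m : ℕ => ((t^m) (st7_e j)) i) ((S (st7_e j)) i) := by
    simpa using hgeom.mapL ((st7_ev i).comp (ContinuousLinearMap.apply ℝ E₁ (st7_e j)))
  have hterm : ∀ m : ℕ, 0 ≤ ((t^m) (st7_e j)) i := by
    intro m
    rw [ht_def, smul_pow, ContinuousLinearMap.smul_apply]
    have : (0:ℝ) ≤ ((Ψ^m) (st7_e j)) i := st7_pow_pos_apply Ψ hΨcol m (st7_e_pos j) i
    have h4 : (0:ℝ) ≤ (u⁻¹)^m := pow_nonneg (inv_nonneg.mpr hu0.le) m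
    simpa [lp.coeFn_smul] using mul_nonneg h4 this
  have hSpos : 0 ≤ (S (st7_e j)) i := by
    rw [← hsum.tsum_eq]
    exact tsum_nonneg hterm
  rw [hR]
  simp only [ContinuousLinearMap.smul_apply]
  have : (0:ℝ) ≤ u⁻¹ * (S (st7_e j)) i := mul_nonneg (inv_nonneg.mpr hu0.le) hSpos
  simpa [lp.coeFn_smul] using this

lemma st7_taylor (Ψ : E₁ →L[ℝ] E₁) {u0 u : ℝ}
    (h0 : IsUnit (algebraMap ℝ (E₁ →L[ℝ] E₁) u0 - Ψ))
    (hpos0 : ∀ j, st7_Pos (st7_R Ψ u0 (st7_e j)))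
    (hle : u ≤ u0) (hnear : (u0 - u) * ‖st7_R Ψ u0‖ < 1) :
    IsUnit (algebraMap ℝ (E₁ →L[ℝ] E₁) u - Ψ)
      ∧ ∀ j, st7_Pos (st7_R Ψ u (st7_e j)) := by
  set R0 := st7_R Ψ u0 with hR0
  set t : E₁ →L[ℝ] E₁ := (u0 - u) • R0 with ht_def
  have ht : ‖t‖ < 1 := by
    rw [ht_def]
    rw [norm_smul (u0-u) R0, Real.norm_eq_abs, abs_of_nonneg (sub_nonneg.mpr hle)]
    exact hnear
  have hA1 : (algebraMap ℝ (E₁ →L[ℝ] E₁) u0 - Ψ) * R0 = 1 :=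
    Ring.mul_inverse_cancel _ h0
  have hA2 : R0 * (algebraMap ℝ (E₁ →L[ℝ] E₁) u0 - Ψ) = 1 :=
    Ring.inverse_mul_cancel _ h0
  have hfact : algebraMap ℝ (E₁ →L[ℝ] E₁) u - Ψ
      = (algebraMap ℝ (E₁ →L[ℝ] E₁) u0 - Ψ) * (1 - t) := by
    rw [mul_sub, mul_one, ht_def, mul_smul_comm, hA1]
    rw [Algebra.algebraMap_eq_smul_one, Algebra.algebraMap_eq_smul_one, sub_smul]
    abel
  set S : E₁ →L[ℝ] E₁ := Ring.inverse (1 - t) with hS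
  have hut : IsUnit ((1 : E₁ →L[ℝ] E₁) - t) := isUnit_one_sub_of_norm_lt_one ht
  have h1 : ((1 : E₁ →L[ℝ] E₁) - t) * S = 1 := Ring.mul_inverse_cancel _ hut
  have h2 : S * ((1 : E₁ →L[ℝ] E₁) - t) = 1 := Ring.inverse_mul_cancel _ hut
  have hmul1 : (algebraMap ℝ (E₁ →L[ℝ] E₁) u - Ψ) * (S * R0) = 1 := by
    rw [hfact, mul_assoc, ← mul_assoc (1 - t) S R0, h1, one_mul, hA1]
  have hmul2 : (S * R0) * (algebraMap ℝ (E₁ →L[ℝ] E₁) u - Ψ) = 1 := by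
    rw [hfact, mul_assoc, ← mul_assoc R0 _ (1 - t), hA2, one_mul, h2]
  have hunit : IsUnit (algebraMap ℝ (E₁ →L[ℝ] E₁) u - Ψ) :=
    ⟨⟨_, S * R0, hmul1, hmul2⟩, rfl⟩
  refine ⟨hunit, fun j i => ?_⟩
  have hR : st7_R Ψ u = S * R0 :=
    Ring.inverse_unit ⟨_, S * R0, hmul1, hmul2⟩
  have hgeom : HasSum (fun m : ℕ => t^m) S := hasSum_geom_series_inverse t ht
  have hsum : HasSum (fun m : ℕ => ((t^m) (R0 (st7_e j))) i) ((S (R0 (st7_e j))) i) := by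
    simpa using hgeom.mapL ((st7_ev i).comp (ContinuousLinearMap.apply ℝ E₁ (R0 (st7_e j))))
  have hterm : ∀ m : ℕ, 0 ≤ ((t^m) (R0 (st7_e j))) i := by
    intro m
    rw [ht_def, smul_pow, ContinuousLinearMap.smul_apply]
    have h3 : (0:ℝ) ≤ ((R0^m) (R0 (st7_e j))) i :=
      st7_pow_pos_apply R0 hpos0 m (hpos0 j) i
    have h4 : (0:ℝ) ≤ (u0 - u)^m := pow_nonneg (sub_nonneg.mpr hle) m
    simpa [lp.coeFn_smul] using mul_nonneg h4 h3
  have hSpos : 0 ≤ (S (R0 (st7_e j))) i := by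
    rw [← hsum.tsum_eq]
    exact tsum_nonneg hterm
  rw [hR]
  simpa [ContinuousLinearMap.mul_apply] using hSpos

lemma st7_resolvent_pos (Ψ : E₁ →L[ℝ] E₁) (hΨcol : ∀ j, st7_Pos (Ψ (st7_e j)))
    {rr : ℝ}
    (hunit : ∀ u : ℝ, rr < u → IsUnit (algebraMap ℝ (E₁ →L[ℝ] E₁) u - Ψ)) :
    ∀ u : ℝ, rr < u → ∀ j, st7_Pos (st7_R Ψ u (st7_e j)) := by
  intro u1 hu1
  set PosE : ℝ → Prop := fun u => ∀ j, st7_Pos (st7_R Ψ u (st7_e j)) with hPosE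
  set S : Set ℝ := {v | u1 ≤ v ∧ ∀ u : ℝ, v ≤ u → PosE u} with hSdef
  have hv0 : max u1 (‖Ψ‖ + 1) ∈ S := by
    refine ⟨le_max_left _ _, fun u hu => ?_⟩
    have : ‖Ψ‖ < u := by
      have := le_trans (le_max_right u1 (‖Ψ‖ + 1)) hu
      linarith
    exact (st7_base Ψ hΨcol this).2
  have hbdd : BddBelow S := ⟨u1, fun v hv => hv.1⟩
  have hne : S.Nonempty := ⟨_, hv0⟩
  set w := sInf S with hw
  have hwu1 : u1 ≤ w := le_csInf hne (fun v hv => hv.1)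
  have hwrr : rr < w := lt_of_lt_of_le hu1 hwu1
  have hopen : ∀ u, w < u → PosE u := by
    intro u hu
    obtain ⟨v, hvS, hvu⟩ := exists_lt_of_csInf_lt hne hu
    exact hvS.2 u hvu.le
  have hUw : IsUnit (algebraMap ℝ (E₁ →L[ℝ] E₁) w - Ψ) := hunit w hwrr
  have hPw : PosE w := by
    intro j i
    have c1 : ContinuousAt (fun u : ℝ => algebraMap ℝ (E₁ →L[ℝ] E₁) u - Ψ) w :=
      ((continuous_algebraMap ℝ (E₁ →L[ℝ] E₁)).sub continuous_const).continuousAt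
    have c2 : ContinuousAt Ring.inverse (algebraMap ℝ (E₁ →L[ℝ] E₁) w - Ψ) := by
      simpa [hUw.unit_spec] using NormedRing.inverse_continuousAt hUw.unit
    have c3 : ContinuousAt (fun u : ℝ => st7_R Ψ u) w := ContinuousAt.comp c2 c1
    have c4 : ContinuousAt (fun u : ℝ => (st7_R Ψ u (st7_e j)) i) w := by
      exact (((st7_ev i).continuous.comp
        (ContinuousLinearMap.apply ℝ E₁ (st7_e j)).continuous).continuousAt).comp c3
    refine ge_of_tendsto (c4.tendsto.mono_left (nhdsWithin_le_nhds (s := Set.Ioi w))) ?_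
    filter_upwards [self_mem_nhdsWithin] with u hu
    exact hopen u hu j i
  set δ : ℝ := (‖st7_R Ψ w‖ + 1)⁻¹ with hδ
  have hnorm0 : (0:ℝ) ≤ ‖st7_R Ψ w‖ := norm_nonneg _
  have hδpos : 0 < δ := by rw [hδ]; positivity
  have hstep : ∀ u, w - δ < u → u ≤ w → PosE u := by
    intro u h1 h2
    refine (st7_taylor Ψ hUw hPw h2 ?_).2
    have h3 : w - u < δ := by linarith
    have h4 : 0 ≤ w - u := by linarith
    have h5 : δ * (‖st7_R Ψ w‖ + 1) = 1 := inv_mul_cancel₀ (by positivity)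
    nlinarith
  set v1 := max u1 (w - δ/2) with hv1
  have hv1S : v1 ∈ S := by
    refine ⟨le_max_left _ _, fun u hu => ?_⟩
    rcases lt_or_ge u w with h | h
    · refine hstep u ?_ h.le
      have := le_trans (le_max_right u1 (w - δ/2)) hu
      linarith
    · rcases eq_or_lt_of_le h with h' | h'
      · rw [← h']; exact hPw
      · exact hopen u h'
  have hwv1 : w ≤ v1 := csInf_le hbdd hv1S
  have hv1u1 : v1 = u1 := by
    rcases max_cases u1 (w - δ/2) with ⟨h1, _⟩ | ⟨h1, _⟩
    · exact h1
    · exfalso; rw [hv1] at hwv1; rw [h1] at hwv1; linarith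
  exact hv1S.2 u1 (le_of_eq hv1u1)

lemma st7_psi_e (Γ : ℕ → ℕ → ℝ) (lam : ℕ → ℝ) (Ψ : E₁ →L[ℝ] E₁)
    (hΨ : ∀ (x : E₁) (i : ℕ), Ψ x i = ∑' j, (Γ i j / lam i) * x j)
    (i m : ℕ) : (Ψ (st7_e i)) m = Γ m i / lam m := by
  rw [hΨ]
  have h : (fun j => Γ m j / lam m * (st7_e i) j)
      = fun j => if j = i then Γ m i / lam m else 0 := by
    funext j
    rw [st7_e_apply]
    split_ifs with h
    · subst h; rw [mul_one]
    · rw [mul_zero]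
  rw [h]
  exact tsum_ite_eq i _

lemma st7_sig_zero (Ψ : E₁ →L[ℝ] E₁) (j : ℕ) : st7_sig Ψ 0 j = 1 := by
  rw [st7_sig, pow_zero, ContinuousLinearMap.one_apply, st7_L_e]

lemma st7_sig_rec (Γ : ℕ → ℕ → ℝ) (lam : ℕ → ℝ) (Ψ : E₁ →L[ℝ] E₁)
    (hΨ : ∀ (x : E₁) (i : ℕ), Ψ x i = ∑' j, (Γ i j / lam i) * x j)
    (k i : ℕ) :
    HasSum (fun m => (Γ m i / lam m) * st7_sig Ψ k m) (st7_sig Ψ (k+1) i) := by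
  have hbasis : HasSum (fun m => (Ψ (st7_e i)) m • st7_e m) (Ψ (st7_e i)) :=
    st7_hasSum_basis (Ψ (st7_e i))
  have h2 : HasSum (fun m => (Ψ (st7_e i)) m * st7_L ((Ψ^k) (st7_e m)))
      (st7_L ((Ψ^k) (Ψ (st7_e i)))) := by
    have := hbasis.mapL (st7_L.comp (Ψ^k : E₁ →L[ℝ] E₁))
    simpa [ContinuousLinearMap.comp_apply, map_smul, smul_eq_mul] using this
  have h3 : (Ψ^k) (Ψ (st7_e i)) = (Ψ^(k+1)) (st7_e i) := by
    rw [pow_succ, ContinuousLinearMap.mul_apply]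
  rw [h3] at h2
  have h4 : (fun m => (Γ m i / lam m) * st7_sig Ψ k m)
      = fun m => (Ψ (st7_e i)) m * st7_L ((Ψ^k) (st7_e m)) := by
    funext m
    rw [st7_psi_e Γ lam Ψ hΨ i m, st7_sig]
  rw [h4]
  exact h2

/-- Under the hypotheses of the small-gain lemma, for every `ρ > 0` the vector `μ` and
constant `λ∞` can be chosen so that `λ∞ ≥ (1 − r(Ψ)) λ̲ − ρ`. -/
theorem stmt_7 (Γ : ℕ → ℕ → ℝ) (hΓ : ∀ i j, 0 ≤ Γ i j)
    (hcol : ∀ j, Summable fun i => Γ i j)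
    (C : ℝ) (hC : ∀ j, ∑' i, Γ i j ≤ C)
    (lam : ℕ → ℝ) (lamL lamU : ℝ) (hlamL : 0 < lamL)
    (hlam : ∀ i, lamL ≤ lam i ∧ lam i ≤ lamU)
    (Ψ : lp (fun _ : ℕ => ℝ) 1 →L[ℝ] lp (fun _ : ℕ => ℝ) 1)
    (hΨ : ∀ (x : lp (fun _ : ℕ => ℝ) 1) (i : ℕ),
      Ψ x i = ∑' j, (Γ i j / lam i) * x j)
    (hr : spectralRadius ℝ Ψ < 1)
    (ρ : ℝ) (hρ : 0 < ρ) :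
    ∃ (μ : ℕ → ℝ) (lamInf : ℝ), 0 < lamInf ∧
      lamInf ≥ (1 - (spectralRadius ℝ Ψ).toReal) * lamL - ρ ∧
      (∃ m : ℝ, 0 < m ∧ ∀ i, m ≤ μ i) ∧ BddAbove (Set.range μ) ∧
      ∀ i, (Summable fun j => μ j * Γ j i) ∧
        -(μ i * lam i) + ∑' j, μ j * Γ j i ≤ -(lamInf * μ i) := by
  classical
  set r' : ℝ := (spectralRadius ℝ Ψ).toReal with hr'def
  have hrne : spectralRadius ℝ Ψ ≠ ⊤ := ne_top_of_lt hr
  have hr1 : r' < 1 := by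
    have h := (ENNReal.toReal_lt_toReal hrne (by norm_num : (1:ℝ≥0∞) ≠ ⊤)).mpr hr
    simpa using h
  have hr0 : 0 ≤ r' := ENNReal.toReal_nonneg
  have hlam0 : ∀ i, 0 < lam i := fun i => lt_of_lt_of_le hlamL (hlam i).1
  have hlamU : 0 < lamU := lt_of_lt_of_le hlamL ((hlam 0).1.trans (hlam 0).2)
  have hΨpos : ∀ x : E₁, st7_Pos x → st7_Pos (Ψ x) := by
    intro x hx i
    rw [hΨ]
    exact tsum_nonneg fun j => mul_nonneg (div_nonneg (hΓ i j) (hlam0 i).le) (hx j)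
  have hΨcol : ∀ j, st7_Pos (Ψ (st7_e j)) := fun j => hΨpos _ (st7_e_pos j)
  have hunit : ∀ u : ℝ, r' < u → IsUnit (algebraMap ℝ (E₁ →L[ℝ] E₁) u - Ψ) := by
    intro u hu
    have hupos : 0 < u := lt_of_le_of_lt hr0 hu
    have h1 : spectralRadius ℝ Ψ < ‖u‖₊ := by
      rw [show ((‖u‖₊ : ℝ≥0∞)) = ENNReal.ofReal u from by
        rw [← Real.enorm_eq_ofReal hupos.le, enorm_eq_nnnorm]]
      exact (ENNReal.lt_ofReal_iff_toReal_lt hrne).mpr hu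
    exact spectrum.mem_resolventSet_iff.mp
      (spectrum.mem_resolventSet_of_spectralRadius_lt h1)
  -- choice of s and u
  set δ : ℝ := (min (ρ/lamL) (1 - r'))/2 with hδdef
  have hδ0 : 0 < δ := by
    have h1 : 0 < ρ / lamL := div_pos hρ hlamL
    have h2 : (0:ℝ) < 1 - r' := by linarith
    have := lt_min h1 h2
    rw [hδdef]; linarith
  have hδρ : δ ≤ ρ / lamL := by
    rw [hδdef]
    have := min_le_left (ρ/lamL) (1 - r')
    linarith [div_pos hρ hlamL]
  have hδ1 : δ ≤ (1 - r')/2 := by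
    rw [hδdef]
    have := min_le_right (ρ/lamL) (1 - r')
    linarith
  set u : ℝ := r' + δ/2 with hudef
  set s : ℝ := r' + δ with hsdef
  have hru : r' < u := by rw [hudef]; linarith
  have hu0 : 0 < u := lt_of_le_of_lt hr0 hru
  have hus : u < s := by rw [hudef, hsdef]; linarith
  have hs0 : 0 < s := hu0.trans hus
  have hs1 : s < 1 := by rw [hsdef]; linarith
  have hδlam : δ * lamL ≤ ρ := by
    have := (le_div_iff₀ hlamL).mp hδρ
    linarith
  -- positivity of the resolvent, and the key norm bound
  have hRpos := st7_resolvent_pos Ψ hΨcol hunit u hru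
  have hsig_le : ∀ k j, st7_sig Ψ k j ≤ ‖st7_R Ψ u‖ * u^(k+1) :=
    st7_sig_le Ψ hΨcol hu0 (hunit u hru) hRpos
  set M : ℝ := ‖st7_R Ψ u‖ with hMdef
  have hM0 : 0 ≤ M := norm_nonneg _
  have hσ0 : ∀ k j, 0 ≤ st7_sig Ψ k j := st7_sig_nonneg Ψ hΨcol
  -- choice of N
  have hus1 : u/s < 1 := (div_lt_one hs0).mpr hus
  have hus0 : 0 ≤ u/s := by positivity
  obtain ⟨N, hN⟩ := exists_pow_lt_of_lt_one
    (show (0:ℝ) < 1/(M*u+1) by positivity) hus1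
  have hσN : ∀ j, st7_sig Ψ (N+1) j ≤ s^(N+1) := by
    intro j
    have h1 := hsig_le (N+1) j
    have hb0 : (0:ℝ) ≤ (u/s)^(N+1) := pow_nonneg hus0 _
    have h2 : (u/s)^(N+1) ≤ (u/s)^N := pow_le_pow_of_le_one hus0 hus1.le (N.le_succ)
    have hBb : M*u * ((u/s)^(N+1)) ≤ 1 := by
      have h3 : M*u * ((u/s)^(N+1)) ≤ M*u * (1/(M*u+1)) :=
        mul_le_mul_of_nonneg_left (h2.trans hN.le) (by positivity)
      have h4 : M*u * (1/(M*u+1)) ≤ 1 := by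
        rw [mul_one_div, div_le_one (by positivity)]
        linarith
      linarith
    have hid : (u/s)^(N+1) * s^(N+1) = u^(N+1) := by
      rw [div_pow, div_mul_cancel₀]
      exact pow_ne_zero _ hs0.ne'
    have hsN : (0:ℝ) < s^(N+1) := pow_pos hs0 _
    have hpow : u^(N+1+1) = u * ((u/s)^(N+1) * s^(N+1)) := by
      rw [hid]; ring
    calc st7_sig Ψ (N+1) j ≤ M * u^(N+1+1) := h1
      _ = (M*u * ((u/s)^(N+1))) * s^(N+1) := by rw [hpow]; ring
      _ ≤ 1 * s^(N+1) := mul_le_mul_of_nonneg_right hBb hsN.le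
      _ = s^(N+1) := one_mul _
  -- the vector μ
  set ν : ℕ → ℝ := fun j => ∑ k ∈ Finset.range (N+1), (s⁻¹)^k * st7_sig Ψ k j with hνdef
  set μ : ℕ → ℝ := fun j => ν j / lam j with hμdef
  have hterm0 : ∀ k j, 0 ≤ (s⁻¹)^k * st7_sig Ψ k j :=
    fun k j => mul_nonneg (pow_nonneg (inv_nonneg.mpr hs0.le) _) (hσ0 k j)
  have hν1 : ∀ j, 1 ≤ ν j := by
    intro j
    have h := Finset.single_le_sum (f := fun k => (s⁻¹)^k * st7_sig Ψ k j)
      (fun k _ => hterm0 k j) (Finset.mem_range.mpr (Nat.succ_pos N))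
    simpa only [pow_zero, one_mul, st7_sig_zero, Nat.succ_eq_add_one, hνdef] using h
  have hν0 : ∀ j, 0 ≤ ν j := fun j => zero_le_one.trans (hν1 j)
  set Cν : ℝ := ∑ k ∈ Finset.range (N+1), (s⁻¹)^k * (M * u^(k+1)) with hCνdef
  have hνC : ∀ j, ν j ≤ Cν := by
    intro j
    refine Finset.sum_le_sum fun k _ => ?_
    exact mul_le_mul_of_nonneg_left (hsig_le k j)
      (pow_nonneg (inv_nonneg.mpr hs0.le) _)
  have hCν0 : (0:ℝ) ≤ Cν := le_trans (hν0 0) (hνC 0)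
  have hμlow : ∀ j, lamU⁻¹ ≤ μ j := by
    intro j
    simp only [hμdef]
    rw [inv_eq_one_div]
    exact div_le_div₀ (hν0 j) (hν1 j) (hlam0 j) ((hlam j).2)
  have hμ0 : ∀ j, 0 ≤ μ j := fun j => le_trans (by positivity) (hμlow j)
  have hμup : ∀ j, μ j ≤ Cν / lamL := by
    intro j
    simp only [hμdef]
    exact div_le_div₀ hCν0 (hνC j) hlamL ((hlam j).1)
  refine ⟨μ, (1-s)*lamL, by nlinarith, ?_, ⟨lamU⁻¹, by positivity, hμlow⟩,
    ⟨Cν/lamL, ?_⟩, ?_⟩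
  · -- lamInf ≥ (1 - r')*lamL - ρ
    rw [hsdef]
    have : (1 - (r' + δ)) * lamL = (1 - r')*lamL - δ*lamL := by ring
    rw [this]
    have hgoal : (1 - r') * lamL - δ*lamL ≥ (1 - r') * lamL - ρ := by linarith
    exact hgoal
  · -- BddAbove
    rintro y ⟨j, rfl⟩
    exact hμup j
  · -- main inequality
    intro i
    have hrec : ∀ k, HasSum (fun m => (Γ m i / lam m) * st7_sig Ψ k m)
        (st7_sig Ψ (k+1) i) := fun k => st7_sig_rec Γ lam Ψ hΨ k i
    have hsum_μΓ : Summable (fun j => μ j * Γ j i) := by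
      refine Summable.of_nonneg_of_le
        (fun j => mul_nonneg (hμ0 j) (hΓ j i)) (fun j => ?_)
        ((hcol i).mul_left (Cν/lamL))
      exact mul_le_mul_of_nonneg_right (hμup j) (hΓ j i)
    refine ⟨hsum_μΓ, ?_⟩
    have hptwise : ∀ j, μ j * Γ j i
        = ∑ k ∈ Finset.range (N+1), (s⁻¹)^k * ((Γ j i / lam j) * st7_sig Ψ k j) := by
      intro j
      have hlj : lam j ≠ 0 := (hlam0 j).ne'
      rw [hμdef]
      simp only
      rw [div_mul_eq_mul_div, hνdef]
      simp only
      rw [Finset.sum_mul, Finset.sum_div]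
      refine Finset.sum_congr rfl fun k _ => ?_
      field_simp
    have htsum : ∑' j, μ j * Γ j i
        = ∑ k ∈ Finset.range (N+1), (s⁻¹)^k * st7_sig Ψ (k+1) i := by
      rw [tsum_congr hptwise, Summable.tsum_finsetSum
        (fun k _ => ((hrec k).summable.mul_left ((s⁻¹)^k)))]
      refine Finset.sum_congr rfl fun k _ => ?_
      rw [tsum_mul_left, (hrec k).tsum_eq]
    -- algebraic manipulation of the finite sum
    have hWsum : ∑ k ∈ Finset.range (N+1), (s⁻¹)^k * st7_sig Ψ (k+1) i
        = s * (ν i - 1 + (s⁻¹)^(N+1) * st7_sig Ψ (N+1) i) := by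
      have hterm : ∀ k, (s⁻¹)^k * st7_sig Ψ (k+1) i
          = s * ((s⁻¹)^(k+1) * st7_sig Ψ (k+1) i) := by
        intro k
        rw [pow_succ' s⁻¹ k, ← mul_assoc, ← mul_assoc, mul_inv_cancel₀ hs0.ne', one_mul]
      rw [Finset.sum_congr rfl (fun k _ => hterm k), ← Finset.mul_sum]
      congr 1
      have h1 : ∑ k ∈ Finset.range (N+2), (s⁻¹)^k * st7_sig Ψ k i
          = (∑ k ∈ Finset.range (N+1), (s⁻¹)^(k+1) * st7_sig Ψ (k+1) i)
            + (s⁻¹)^0 * st7_sig Ψ 0 i :=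
        Finset.sum_range_succ' (fun k => (s⁻¹)^k * st7_sig Ψ k i) (N+1)
      have h2 : ∑ k ∈ Finset.range (N+2), (s⁻¹)^k * st7_sig Ψ k i
          = ν i + (s⁻¹)^(N+1) * st7_sig Ψ (N+1) i := by
        rw [Finset.sum_range_succ, hνdef]
      rw [st7_sig_zero, pow_zero, one_mul] at h1
      linarith [h1, h2]
    have htail : (s⁻¹)^(N+1) * st7_sig Ψ (N+1) i ≤ 1 := by
      have h1 : (s⁻¹)^(N+1) * st7_sig Ψ (N+1) i ≤ (s⁻¹)^(N+1) * s^(N+1) :=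
        mul_le_mul_of_nonneg_left (hσN i) (pow_nonneg (inv_nonneg.mpr hs0.le) _)
      rw [← mul_pow, inv_mul_cancel₀ hs0.ne', one_pow] at h1
      exact h1
    have hsν : ∑' j, μ j * Γ j i ≤ s * ν i := by
      rw [htsum, hWsum]
      have : ν i - 1 + (s⁻¹)^(N+1) * st7_sig Ψ (N+1) i ≤ ν i := by linarith
      exact le_trans (mul_le_mul_of_nonneg_left this hs0.le) le_rfl
    have hμlam : μ i * lam i = ν i := by
      rw [hμdef]
      exact div_mul_cancel₀ _ (hlam0 i).ne'
    have hμν : lamL * μ i ≤ ν i := by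
      have h2 : μ i ≤ ν i / lamL := by
        simp only [hμdef]
        exact div_le_div₀ (hν0 i) le_rfl hlamL ((hlam i).1)
      calc lamL * μ i ≤ lamL * (ν i / lamL) :=
            mul_le_mul_of_nonneg_left h2 hlamL.le
        _ = ν i := by field_simp
    have hfin : (1-s)*lamL * μ i ≤ (1-s) * ν i := by
      have h1s : (0:ℝ) ≤ 1 - s := by linarith
      calc (1-s)*lamL * μ i = (1-s) * (lamL * μ i) := by ring
        _ ≤ (1-s) * ν i := mul_le_mul_of_nonneg_left hμν h1s
    rw [hμlam]
    linarith
end Stmt7Aux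
end

section
/- Let X be a Banach space and V : X → ℝ_+ be continuous on X \ A with ω̲ |x|_A^b ≤ V(x) ≤ ω̄ |x|_A^b for constants ω̲, ω̄, b > 0, and suppose along every trajectory φ(t,x⁰,u) of a forward complete system the Dini derivative satisfies D⁺(V∘φ)(t) ≤ −κ V(φ(t)) + γ(|u|_∞) for all t with φ(t) ∉ A, where κ > 0 and γ ∈ K_∞. Then the system is exponentially ISS with respect to A: there exist M, a > 0 and γ̃ ∈ K such that |φ(t,x⁰,u)|_A ≤ M e^{−at} |x⁰|_A + γ̃(|u|_∞) for all t ≥ 0. -/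
open Filter Real Set Metric

/-- Dini-derivative comparison lemma. -/
lemma dini_comparison (W : ℝ → ℝ) (hWc : Continuous W) (hWnn : ∀ t, 0 ≤ W t)
    (κ g : ℝ) (hκ : 0 < κ) (hg : 0 ≤ g)
    (hD : ∀ t, 0 ≤ t → 0 < W t →
      limsup (fun h : ℝ => (W (t + h) - W t) / h) (nhdsWithin 0 (Set.Ioi 0))
        ≤ -κ * W t + g) :
    ∀ t, 0 ≤ t → W t ≤ Real.exp (-κ * t) * W 0 + g / κ := by
  have key : ∀ ε : ℝ, 0 < ε → ∀ t, 0 ≤ t →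
      W t ≤ Real.exp (-κ * t) * (W 0 + ε) + (g + ε) / κ := by
    intro ε hε
    obtain ⟨z, hzdef⟩ : ∃ z : ℝ → ℝ,
        ∀ t, z t = Real.exp (-κ * t) * (W 0 + ε) + (g + ε) / κ := ⟨_, fun _ => rfl⟩
    have hzfun : z = fun t => Real.exp (-κ * t) * (W 0 + ε) + (g + ε) / κ :=
      funext hzdef
    have hzc : Continuous z := by
      rw [hzfun]
      exact ((Real.continuous_exp.comp (continuous_const.mul continuous_id)).mul
        continuous_const).add continuous_const
    suffices hsuff : ∀ t, 0 ≤ t → W t ≤ z t by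
      intro t ht; rw [← hzdef t]; exact hsuff t ht
    by_contra hcon
    push_neg at hcon
    obtain ⟨t₁, ht₁, ht₁'⟩ := hcon
    have hSne : {t : ℝ | 0 ≤ t ∧ z t < W t}.Nonempty := ⟨t₁, ht₁, ht₁'⟩
    set S : Set ℝ := {t | 0 ≤ t ∧ z t < W t} with hS
    have hSbdd : BddBelow S := ⟨0, by rintro t ⟨ht, -⟩; exact ht⟩
    set t₀ := sInf S with ht₀def
    have ht₀cl : t₀ ∈ closure S := csInf_mem_closure hSne hSbdd
    have ht₀C : 0 ≤ t₀ ∧ z t₀ ≤ W t₀ := by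
      have hclosed : IsClosed {t : ℝ | 0 ≤ t ∧ z t ≤ W t} :=
        (isClosed_Ici.preimage continuous_id).inter (isClosed_le hzc hWc)
      exact closure_minimal (show S ⊆ {t : ℝ | 0 ≤ t ∧ z t ≤ W t} from fun t ht => ⟨ht.1, ht.2.le⟩) hclosed ht₀cl
    have hgκpos : 0 < (g + ε) / κ := div_pos (by linarith) hκ
    have hW0z : W 0 < z 0 := by
      rw [hzdef]; simp only [mul_zero, Real.exp_zero, one_mul]; linarith
    have ht₀pos : 0 < t₀ := by
      rcases lt_or_eq_of_le ht₀C.1 with h | h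
      · exact h
      · exfalso
        have h2 := ht₀C.2
        rw [← h] at h2
        linarith
    have hle : W t₀ ≤ z t₀ := by
      have hIco : ∀ t ∈ Set.Ico 0 t₀, W t ≤ z t := by
        intro t ⟨h0, hlt⟩
        by_contra h'
        push_neg at h'
        exact absurd (csInf_le hSbdd ⟨h0, h'⟩) (not_le.mpr hlt)
      have hclosed : IsClosed {t : ℝ | W t ≤ z t} := isClosed_le hWc hzc
      have : t₀ ∈ closure (Set.Ico 0 t₀) := by
        rw [closure_Ico ht₀pos.ne]; exact ⟨ht₀pos.le, le_refl _⟩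
      exact closure_minimal hIco hclosed this
    have heq : W t₀ = z t₀ := le_antisymm hle ht₀C.2
    have hexp_nn : 0 ≤ Real.exp (-κ * t₀) * (W 0 + ε) :=
      mul_nonneg (Real.exp_pos _).le (by linarith [hWnn 0])
    have hzgt : g / κ < z t₀ := by
      have h1 : g / κ < (g + ε) / κ := by gcongr; linarith
      have h2 : (g + ε) / κ ≤ z t₀ := by rw [hzdef]; linarith
      linarith
    have hWpos : 0 < W t₀ := by
      have : (0:ℝ) ≤ g / κ := div_nonneg hg hκ.le
      rw [heq]; linarith
    have hDt := hD t₀ ht₀C.1 hWpos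
    obtain ⟨z', hz'⟩ : ∃ z' : ℝ, z' = -κ * (Real.exp (-κ * t₀) * (W 0 + ε)) :=
      ⟨_, rfl⟩
    have hrhs : -κ * W t₀ + g = z' - ε := by
      rw [heq, hzdef, hz']
      field_simp
      ring
    have hderiv : HasDerivAt z z' t₀ := by
      rw [hzfun]
      have h1 : HasDerivAt (fun t : ℝ => -κ * t) (-κ) t₀ := by
        simpa using (hasDerivAt_id t₀).const_mul (-κ)
      have h2 := ((h1.exp).mul_const (W 0 + ε)).add_const ((g + ε) / κ)
      exact h2.congr_deriv (by rw [hz']; ring)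
    have htendsmap : Tendsto (fun h : ℝ => t₀ + h) (nhdsWithin 0 (Set.Ioi 0))
        (nhdsWithin t₀ {t₀}ᶜ) := by
      apply tendsto_nhdsWithin_of_tendsto_nhds_of_eventually_within
      · have : Tendsto (fun h : ℝ => t₀ + h) (nhds 0) (nhds (t₀ + 0)) :=
          (continuous_const.add continuous_id).continuousAt
        simpa using this.mono_left nhdsWithin_le_nhds
      · filter_upwards [self_mem_nhdsWithin] with h hh
        exact Set.mem_compl_singleton_iff.mpr (lt_add_of_pos_right t₀ hh).ne'
    have htends : Tendsto (fun h : ℝ => (z (t₀ + h) - z t₀) / h)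
        (nhdsWithin 0 (Set.Ioi 0)) (nhds z') := by
      have h3 := (hasDerivAt_iff_tendsto_slope.mp hderiv).comp htendsmap
      have heq2 : ∀ h : ℝ, slope z t₀ (t₀ + h) = (z (t₀ + h) - z t₀) / h := by
        intro h; rw [slope_def_field]; congr 1; ring
      simpa only [Function.comp_def, heq2] using h3
    have hfreq : ∃ᶠ h in nhdsWithin (0:ℝ) (Set.Ioi 0),
        (z (t₀ + h) - z t₀) / h ≤ (W (t₀ + h) - W t₀) / h := by
      rw [Filter.frequently_iff]
      intro U hU
      obtain ⟨δ, hδ, hδsub⟩ := Metric.mem_nhdsWithin_iff.mp hU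
      obtain ⟨s, hsS, hslt⟩ := exists_lt_of_csInf_lt hSne
        (show sInf S < t₀ + δ by rw [← ht₀def]; linarith)
      have hst₀ : t₀ ≤ s := csInf_le hSbdd hsS
      have hsne : s ≠ t₀ := by
        intro h; rw [h] at hsS; exact absurd hsS.2 (by rw [heq]; exact lt_irrefl _)
      have hsgt : t₀ < s := lt_of_le_of_ne hst₀ (Ne.symm hsne)
      refine ⟨s - t₀, hδsub ⟨?_, by simpa using hsgt⟩, ?_⟩
      · rw [Metric.mem_ball, Real.dist_eq, sub_zero, abs_of_pos (by linarith)]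
        linarith
      · have h1 : t₀ + (s - t₀) = s := by ring
        rw [h1, heq]
        gcongr
        exact hsS.2.le
    by_cases hbd : Filter.IsBoundedUnder (· ≤ ·) (nhdsWithin (0:ℝ) (Set.Ioi 0))
        (fun h : ℝ => (W (t₀ + h) - W t₀) / h)
    · have h1 : ∀ᶠ h in nhdsWithin (0:ℝ) (Set.Ioi 0),
          z' - ε / 2 < (z (t₀ + h) - z t₀) / h :=
        htends.eventually (eventually_gt_nhds (by linarith))
      have hfreq2 : ∃ᶠ h in nhdsWithin (0:ℝ) (Set.Ioi 0),
          z' - ε / 2 ≤ (W (t₀ + h) - W t₀) / h := by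
        refine (hfreq.and_eventually h1).mono ?_
        rintro h ⟨h2, h3⟩; linarith
      have := Filter.le_limsup_of_frequently_le hfreq2 hbd
      rw [hrhs] at hDt
      linarith [le_trans this hDt]
    · have hset : {a : ℝ | ∀ᶠ h in nhdsWithin (0:ℝ) (Set.Ioi 0),
          (W (t₀ + h) - W t₀) / h ≤ a} = ∅ := by
        ext a
        simp only [Set.mem_setOf_eq, Set.mem_empty_iff_false, iff_false]
        intro h
        exact hbd ⟨a, by rwa [Filter.eventually_map]⟩
      rw [Filter.limsup_eq, hset, Real.sInf_empty, heq] at hDt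
      have hgk : g < z t₀ * κ := (div_lt_iff₀ hκ).mp hzgt
      nlinarith
  intro t ht
  apply le_of_forall_pos_le_add
  intro ε hε
  have hε'pos : 0 < min (ε * κ / 2) (ε / 2) := lt_min (by positivity) (by positivity)
  set ε' := min (ε * κ / 2) (ε / 2) with hε'
  have h1 := key ε' hε'pos t ht
  have hexple : Real.exp (-κ * t) ≤ 1 := Real.exp_le_one_iff.mpr (by nlinarith)
  have hexpnn : (0:ℝ) ≤ Real.exp (-κ * t) := (Real.exp_pos _).le
  have h2 : Real.exp (-κ * t) * ε' ≤ ε / 2 := by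
    calc Real.exp (-κ * t) * ε' ≤ 1 * ε' := by gcongr
    _ = ε' := one_mul _
    _ ≤ ε / 2 := min_le_right _ _
  have h3 : ε' / κ ≤ ε / 2 := by
    calc ε' / κ ≤ (ε * κ / 2) / κ := by gcongr; exact min_le_left _ _
    _ = ε / 2 := by field_simp
  have h4 : (g + ε') / κ = g / κ + ε' / κ := add_div _ _ _
  rw [mul_add, h4] at h1
  linarith


/-- Existence of an eISS Lyapunov function w.r.t. a nonempty closed set `A` (dissipative form,
with Dini derivative along trajectories) implies exponential ISS w.r.t. `A`. -/
theorem stmt_9 {X : Type*} [NormedAddCommGroup X] [NormedSpace ℝ X]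
    (A : Set X) (hAne : A.Nonempty) (hAcl : IsClosed A)
    (V : X → ℝ) (hVcont : ContinuousOn V Aᶜ)
    (ω₁ ω₂ b κ : ℝ) (hω₁ : 0 < ω₁) (hω₂ : 0 < ω₂) (hb : 0 < b) (hκ : 0 < κ)
    (hV : ∀ x, ω₁ * Metric.infDist x A ^ b ≤ V x ∧ V x ≤ ω₂ * Metric.infDist x A ^ b)
    (γ : ℝ → ℝ) (hγc : Continuous γ) (hγm : StrictMono γ) (hγ0 : γ 0 = 0)
    (hγtop : Filter.Tendsto γ Filter.atTop Filter.atTop)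
    {ι : Type*} (r : ι → ℝ) (hr : ∀ u, 0 ≤ r u)
    (φ : X → ι → ℝ → X)
    (hφ0 : ∀ x0 u, φ x0 u 0 = x0)
    (hφc : ∀ x0 u, Continuous (φ x0 u))
    (hDini : ∀ x0 u t, 0 ≤ t → φ x0 u t ∉ A →
      Filter.limsup (fun h : ℝ => (V (φ x0 u (t + h)) - V (φ x0 u t)) / h)
          (nhdsWithin 0 (Set.Ioi 0))
        ≤ -κ * V (φ x0 u t) + γ (r u)) :
    ∃ M c : ℝ, 0 < M ∧ 0 < c ∧ ∃ γ' : ℝ → ℝ, Continuous γ' ∧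
      StrictMonoOn γ' (Set.Ici 0) ∧ γ' 0 = 0 ∧
      ∀ x0 u t, 0 ≤ t →
        Metric.infDist (φ x0 u t) A
          ≤ M * Real.exp (-c * t) * Metric.infDist x0 A + γ' (r u) := by
  have hb' : (0:ℝ) < 1 / b := by positivity
  -- V vanishes on A and is nonnegative
  have hVA : ∀ x ∈ A, V x = 0 := by
    intro x hx
    have hd : Metric.infDist x A = 0 := Metric.infDist_zero_of_mem hx
    have h1 := (hV x).1
    have h2 := (hV x).2
    rw [hd, Real.zero_rpow hb.ne', mul_zero] at h1 h2
    linarith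
  have hVnn : ∀ x, 0 ≤ V x := fun x =>
    le_trans (mul_nonneg hω₁.le (Real.rpow_nonneg Metric.infDist_nonneg b)) (hV x).1
  -- continuity of the distance-power function and of V on all of X
  have hdcont : Continuous fun x : X => Metric.infDist x A ^ b := by
    have h1 : Continuous fun y : ℝ => y ^ b := by
      rw [continuous_iff_continuousAt]
      exact fun y => Real.continuousAt_rpow_const y b (Or.inr hb.le)
    exact h1.comp (Metric.continuous_infDist_pt A)
  have hVc : Continuous V := by
    rw [continuous_iff_continuousAt]
    intro x
    by_cases hx : x ∈ A
    · have hVx : V x = 0 := hVA x hx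
      rw [ContinuousAt, hVx]
      apply squeeze_zero hVnn (fun y => (hV y).2)
      have : Tendsto (fun y : X => ω₂ * Metric.infDist y A ^ b) (nhds x)
          (nhds (ω₂ * Metric.infDist x A ^ b)) :=
        (continuous_const.mul hdcont).continuousAt
      rwa [Metric.infDist_zero_of_mem hx, Real.zero_rpow hb.ne', mul_zero] at this
    · exact hVcont.continuousAt (hAcl.isOpen_compl.mem_nhds hx)
  -- the constants and the gain function
  refine ⟨(2:ℝ) ^ (1/b) * (ω₂ / ω₁) ^ (1/b), κ / b, by positivity, by positivity,
    fun s => (2:ℝ) ^ (1/b) * (max (γ s) 0 / (κ * ω₁)) ^ (1/b), ?_, ?_, ?_, ?_⟩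
  · exact continuous_const.mul
      (((hγc.max continuous_const).div_const _).rpow_const (fun x => Or.inr hb'.le))
  · intro s hs t ht hst
    have hγs : 0 ≤ γ s := by rw [← hγ0]; exact hγm.monotone hs
    have hγt : 0 ≤ γ t := by rw [← hγ0]; exact hγm.monotone ht
    dsimp only
    rw [max_eq_left hγs, max_eq_left hγt]
    have h2 : (0:ℝ) < (2:ℝ) ^ (1/b) := Real.rpow_pos_of_pos (by norm_num) _
    apply mul_lt_mul_of_pos_left _ h2
    apply Real.rpow_lt_rpow (div_nonneg hγs (by positivity)) _ hb'
    gcongr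
    exact hγm hst
  · simp only [hγ0, max_self, zero_div, Real.zero_rpow hb'.ne', mul_zero]
  · intro x0 u t ht
    set g := γ (r u) with hgdef
    have hg : 0 ≤ g := by rw [hgdef, ← hγ0]; exact hγm.monotone (hr u)
    -- apply the comparison lemma to W = V ∘ φ
    have hW := dini_comparison (fun t => V (φ x0 u t))
      (hVc.comp (hφc x0 u)) (fun t => hVnn _) κ g hκ hg
      (fun s hs hpos => by
        have hpos' : 0 < V (φ x0 u s) := hpos
        have hnm : φ x0 u s ∉ A := fun hmem => by
          rw [hVA _ hmem] at hpos'; exact lt_irrefl 0 hpos'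
        exact hDini x0 u s hs hnm) t ht
    simp only [hφ0] at hW
    set d := Metric.infDist (φ x0 u t) A with hd
    set d0 := Metric.infDist x0 A with hd0
    have hdnn : 0 ≤ d := Metric.infDist_nonneg
    have hd0nn : 0 ≤ d0 := Metric.infDist_nonneg
    have hchain : ω₁ * d ^ b ≤ Real.exp (-κ * t) * (ω₂ * d0 ^ b) + g / κ := by
      have h1 := (hV (φ x0 u t)).1
      have h2 := (hV x0).2
      have h3 : Real.exp (-κ * t) * V x0 ≤ Real.exp (-κ * t) * (ω₂ * d0 ^ b) := by
        gcongr
      linarith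
    set P := Real.exp (-κ * t) * (ω₂ / ω₁) * d0 ^ b with hP
    set G := g / (κ * ω₁) with hG
    have hPnn : 0 ≤ P := by positivity
    have hGnn : 0 ≤ G := div_nonneg hg (by positivity)
    have key1 : d ^ b ≤ P + G := by
      have hPG : ω₁ * (P + G) = Real.exp (-κ * t) * (ω₂ * d0 ^ b) + g / κ := by
        rw [hP, hG]; field_simp
      have := hchain
      rw [← hPG] at this
      exact le_of_mul_le_mul_left this hω₁
    have key2 : d ≤ (P + G) ^ (1/b) := by
      have h1 : d = (d ^ b) ^ (1/b) := by
        rw [← Real.rpow_mul hdnn, mul_one_div_cancel hb.ne', Real.rpow_one]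
      rw [h1]
      exact Real.rpow_le_rpow (Real.rpow_nonneg hdnn b) key1 hb'.le
    have key3 : (P + G) ^ (1/b) ≤ (2:ℝ) ^ (1/b) * (P ^ (1/b) + G ^ (1/b)) := by
      have hmax : P + G ≤ 2 * max P G := by
        rcases le_total P G with h | h
        · rw [max_eq_right h]; linarith
        · rw [max_eq_left h]; linarith
      calc (P + G) ^ (1/b) ≤ (2 * max P G) ^ (1/b) :=
            Real.rpow_le_rpow (by linarith) hmax hb'.le
        _ = (2:ℝ) ^ (1/b) * (max P G) ^ (1/b) :=
            Real.mul_rpow (by norm_num) (le_max_of_le_left hPnn)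
        _ ≤ (2:ℝ) ^ (1/b) * (P ^ (1/b) + G ^ (1/b)) := by
            apply mul_le_mul_of_nonneg_left _ (Real.rpow_nonneg (by norm_num) _)
            rcases le_total P G with h | h
            · rw [max_eq_right h]
              linarith [Real.rpow_nonneg hPnn (1/b)]
            · rw [max_eq_left h]
              linarith [Real.rpow_nonneg hGnn (1/b)]
    have key4 : P ^ (1/b) = Real.exp (-(κ/b) * t) * (ω₂ / ω₁) ^ (1/b) * d0 := by
      rw [hP, Real.mul_rpow (by positivity) (Real.rpow_nonneg hd0nn b),
        Real.mul_rpow (Real.exp_pos _).le (by positivity),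
        ← Real.rpow_mul hd0nn, mul_one_div_cancel hb.ne', Real.rpow_one,
        Real.rpow_def_of_pos (Real.exp_pos _), Real.log_exp]
      congr 2
      field_simp
    calc d ≤ (P + G) ^ (1/b) := key2
      _ ≤ (2:ℝ) ^ (1/b) * (P ^ (1/b) + G ^ (1/b)) := key3
      _ = (2:ℝ) ^ (1/b) * (ω₂ / ω₁) ^ (1/b) * Real.exp (-(κ/b) * t) * d0
            + (2:ℝ) ^ (1/b) * G ^ (1/b) := by rw [key4]; ring
      _ = (2:ℝ) ^ (1/b) * (ω₂ / ω₁) ^ (1/b) * Real.exp (-(κ/b) * t) * d0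
            + (2:ℝ) ^ (1/b) * (max (γ (r u)) 0 / (κ * ω₁)) ^ (1/b) := by
          rw [hG, max_eq_left hg]
end
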